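/- Define γ₁¹ : [0,1] → S³ ⊂ ℝ⁴ by γ₁¹(t) = ( (1/4)cos(3πt/2) + (3/4)cos(πt/2), (√3/4)sin(3πt/2) + (√3/4)sin(πt/2), (√3/4)cos(πt/2) − (√3/4)cos(3πt/2), (3/4)sin(πt/2) − (1/4)sin(3πt/2) ). Then γ₁¹ is convex: for every nonzero h ∈ ℝ⁴, γ₁¹ intersects the hyperplane {x ∈ ℝ⁴ : h·x = 0} with total multiplicity at most 3 on (0,1). -/

import Mathlib

open Set Real
open Polynomial
open scoped ContDiff

/-- The Euclidean dot product on `ℝ^k`. -/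
def dotv {k : ℕ} (v w : Fin k → ℝ) : ℝ := ∑ i, v i * w i

/-- The curve `γ` intersects the hyperplane `{x : h·x = 0}` with total multiplicity at
most `N` on the open interval `(a,b)`: for any distinct points `t₁, …, t_j ∈ (a,b)` and
positive integers `m₁, …, m_j` such that `f = h·γ` vanishes at `t_i` together with its
first `m_i − 1` derivatives, one has `m₁ + ⋯ + m_j ≤ N`. -/
def MultAtMost {k : ℕ} (γ : ℝ → Fin k → ℝ) (a b : ℝ) (h : Fin k → ℝ) (N : ℕ) : Prop :=
  ∀ (j : ℕ) (t : Fin j → ℝ) (m : Fin j → ℕ),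
    (∀ i, t i ∈ Ioo a b) → Function.Injective t → (∀ i, 1 ≤ m i) →
    (∀ i, ∀ l < m i, iteratedDeriv l (fun s => dotv h (γ s)) (t i) = 0) →
    ∑ i, m i ≤ N

/-- The curve `γ₁¹ : [0,1] → S³`. -/
noncomputable def gamma11 (t : ℝ) : Fin 4 → ℝ :=
  ![1 / 4 * Real.cos (3 * π * t / 2) + 3 / 4 * Real.cos (π * t / 2),
    Real.sqrt 3 / 4 * Real.sin (3 * π * t / 2) + Real.sqrt 3 / 4 * Real.sin (π * t / 2),
    Real.sqrt 3 / 4 * Real.cos (π * t / 2) - Real.sqrt 3 / 4 * Real.cos (3 * π * t / 2),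
    3 / 4 * Real.sin (π * t / 2) - 1 / 4 * Real.sin (3 * π * t / 2)]

section Aux

noncomputable def thop (c : ℂ) (Q : ℂ[X]) : ℂ[X] := Polynomial.C c * (Polynomial.X * Q.derivative)

lemma iteratedDeriv_poly_exp (c : ℂ) (l : ℕ) :
    ∀ (Q : ℂ[X]) (t₀ : ℝ), iteratedDeriv l (fun t : ℝ => Q.eval (Complex.exp (c * t))) t₀
      = ((thop c)^[l] Q).eval (Complex.exp (c * t₀)) := by
  induction l with
  | zero => intro Q t₀; simp
  | succ l ih =>
    intro Q t₀
    rw [iteratedDeriv_succ']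
    have hder : (deriv fun t : ℝ => Q.eval (Complex.exp (c * t))) =
        fun t : ℝ => (thop c Q).eval (Complex.exp (c * t)) := by
      funext t
      have he : HasDerivAt (fun z : ℂ => Complex.exp (c * z)) (Complex.exp (c * t) * (c * 1)) (t : ℂ) := by
        exact (Complex.hasDerivAt_exp (c * t)).comp (t : ℂ) ((hasDerivAt_id (t : ℂ)).const_mul c)
      have h1 : HasDerivAt (fun z : ℂ => Q.eval (Complex.exp (c * z)))
          (Q.derivative.eval (Complex.exp (c * t)) * (Complex.exp (c * t) * (c * 1))) (t : ℂ) :=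
        by have := (Q.hasDerivAt (Complex.exp (c * t))).comp (t : ℂ) he; exact this
      rw [h1.comp_ofReal.deriv]
      simp [thop]; ring
    rw [hder, ih, Function.iterate_succ_apply]

lemma thop_mult {c : ℂ} (hc : c ≠ 0) {z₀ : ℂ} (hz : z₀ ≠ 0) :
    ∀ (m : ℕ) (Q : ℂ[X]), Q ≠ 0 →
      (∀ l < m, ((thop c)^[l] Q).eval z₀ = 0) → m ≤ Q.rootMultiplicity z₀ := by
  intro m
  induction m with
  | zero => intro Q _ _; exact Nat.zero_le _
  | succ m ih =>
    intro Q hQ hvan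
    have hroot : Q.IsRoot z₀ := by simpa using hvan 0 (Nat.succ_pos m)
    have hd : Q.derivative ≠ 0 := by
      intro h0
      have hQC := Polynomial.eq_C_of_derivative_eq_zero h0
      rw [hQC] at hroot hQ
      simp [Polynomial.IsRoot] at hroot
      rw [hroot] at hQ
      simp at hQ
    have hT : thop c Q ≠ 0 := by
      simp only [thop]
      exact mul_ne_zero (by simpa using hc) (mul_ne_zero Polynomial.X_ne_zero hd)
    have hvan' : ∀ l < m, ((thop c)^[l] (thop c Q)).eval z₀ = 0 := fun l hl => by
      rw [← Function.iterate_succ_apply]; exact hvan (l + 1) (Nat.succ_lt_succ hl)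
    have hle := ih (thop c Q) hT hvan'
    have hmul : (thop c Q).rootMultiplicity z₀ = Q.rootMultiplicity z₀ - 1 := by
      unfold thop
      rw [Polynomial.rootMultiplicity_mul (by rwa [← thop] ),
        Polynomial.rootMultiplicity_mul (mul_ne_zero Polynomial.X_ne_zero hd),
        Polynomial.rootMultiplicity_eq_zero (by simp [Polynomial.IsRoot, hc]),
        Polynomial.rootMultiplicity_eq_zero (by simp [Polynomial.IsRoot, hz]),
        Polynomial.derivative_rootMultiplicity_of_root hroot]
      omega
    have hpos : 1 ≤ Q.rootMultiplicity z₀ := (Polynomial.rootMultiplicity_pos hQ).2 hroot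
    omega

lemma iteratedDeriv_ofReal (n : ℕ) : ∀ (f : ℝ → ℝ), ContDiff ℝ ∞ f → ∀ (x : ℝ),
    iteratedDeriv n (fun s => ((f s : ℝ) : ℂ)) x = Complex.ofReal (iteratedDeriv n f x) := by
  induction n with
  | zero => intro f _ x; simp
  | succ n ih =>
    intro f hf x
    rw [iteratedDeriv_succ', iteratedDeriv_succ']
    have hd : (deriv fun s => ((f s : ℝ) : ℂ)) = fun s => ((deriv f s : ℝ) : ℂ) := by
      funext s
      exact (((hf.differentiable (by simp)) s).hasDerivAt.ofReal_comp).deriv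
    rw [hd]
    exact ih (deriv f) (contDiff_infty_iff_deriv.mp hf).2 x

lemma myIteratedDeriv_add {f g : ℝ → ℂ} (hf : ContDiff ℝ ∞ f) (hg : ContDiff ℝ ∞ g) (n : ℕ) (x : ℝ) :
    iteratedDeriv n (fun s => f s + g s) x = iteratedDeriv n f x + iteratedDeriv n g x := by
  have := iteratedDerivWithin_add (Set.mem_univ x) uniqueDiffOn_univ
    ((hf.of_le (by exact_mod_cast le_top)).contDiffWithinAt (n := n)) ((hg.of_le (by exact_mod_cast le_top)).contDiffWithinAt (n := n))
  simpa [← iteratedDerivWithin_univ, Pi.add_def] using this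

lemma vanish_mul {t₀ : ℝ} : ∀ (m : ℕ) (u v : ℝ → ℂ), ContDiff ℝ ∞ u → ContDiff ℝ ∞ v →
    (∀ l < m, iteratedDeriv l v t₀ = 0) →
    ∀ l < m, iteratedDeriv l (fun s => u s * v s) t₀ = 0 := by
  intro m
  induction m with
  | zero => intro u v _ _ _ l hl; omega
  | succ m ih =>
    intro u v hu hv hvan l hl
    have hu' : ContDiff ℝ ∞ (deriv u) := (contDiff_infty_iff_deriv.mp hu).2
    have hv' : ContDiff ℝ ∞ (deriv v) := (contDiff_infty_iff_deriv.mp hv).2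
    match l with
    | 0 =>
      have h0 : v t₀ = 0 := by simpa using hvan 0 (Nat.succ_pos m)
      simp [h0]
    | Nat.succ l =>
      rw [iteratedDeriv_succ']
      have hder : (deriv fun s => u s * v s) =
          fun s => deriv u s * v s + u s * deriv v s := by
        funext s
        exact deriv_fun_mul ((hu.differentiable (by simp)) s) ((hv.differentiable (by simp)) s)
      rw [hder]
      have hl' : l < m := by omega
      have h1 := ih (deriv u) v hu' hv (fun k hk => hvan k (by omega)) l hl'
      have h2 := ih u (deriv v) hu hv'
        (fun k hk => by rw [← iteratedDeriv_succ']; exact hvan (k + 1) (by omega)) l hl'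
      rw [myIteratedDeriv_add (hu'.mul hv) (hu.mul hv') l t₀, h1, h2, add_zero]

noncomputable def Rpoly (a b cc d : ℝ) : ℂ[X] :=
  Polynomial.C ((a : ℂ) - b * Complex.I) * Polynomial.X ^ 3 +
  Polynomial.C ((cc : ℂ) - d * Complex.I) * Polynomial.X ^ 2 +
  Polynomial.C ((cc : ℂ) + d * Complex.I) * Polynomial.X +
  Polynomial.C ((a : ℂ) + b * Complex.I)

lemma Rpoly_natDegree_le (a b cc d : ℝ) : (Rpoly a b cc d).natDegree ≤ 3 := by
  unfold Rpoly
  compute_degree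

lemma Rpoly_ne_zero {a b cc d : ℝ} (h : ¬(a = 0 ∧ b = 0 ∧ cc = 0 ∧ d = 0)) :
    Rpoly a b cc d ≠ 0 := by
  intro h0
  apply h
  have h3 := congrArg (fun p => Polynomial.coeff p 3) h0
  have h2 := congrArg (fun p => Polynomial.coeff p 2) h0
  simp only [Rpoly, Polynomial.coeff_add, Polynomial.coeff_C_mul, Polynomial.coeff_X_pow,
    Polynomial.coeff_C, Polynomial.coeff_zero, Polynomial.coeff_X] at h3 h2
  norm_num at h3 h2
  have h3' := congrArg Complex.re h3
  have h3'' := congrArg Complex.im h3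
  have h2' := congrArg Complex.re h2
  have h2'' := congrArg Complex.im h2
  simp at h3' h3'' h2' h2''
  exact ⟨h3', by simpa using h3'', h2', by simpa using h2''⟩

lemma key_identity (a b cc d : ℝ) (s : ℝ) :
    (Rpoly a b cc d).eval (Complex.exp ((π : ℂ) * Complex.I * s)) =
    2 * Complex.exp (3 * (π : ℂ) * Complex.I * s / 2) *
      Complex.ofReal (a * Real.cos (3 * π * s / 2) + b * Real.sin (3 * π * s / 2)
        + cc * Real.cos (π * s / 2) + d * Real.sin (π * s / 2)) := by
  set w : ℂ := (π : ℂ) * Complex.I * s / 2 with hw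
  have hE : Complex.exp w ≠ 0 := Complex.exp_ne_zero _
  have h2w : Complex.exp ((π : ℂ) * Complex.I * s) = Complex.exp w ^ 2 := by
    rw [← Complex.exp_nat_mul]; norm_num [hw]; ring_nf
  have h3w : Complex.exp (3 * (π : ℂ) * Complex.I * s / 2) = Complex.exp w ^ 3 := by
    rw [← Complex.exp_nat_mul]; norm_num [hw]; ring_nf
  have hcos3 : (Real.cos (3 * π * s / 2) : ℂ) = (Complex.exp w ^ 3 + (Complex.exp w ^ 3)⁻¹) / 2 := by
    rw [Complex.ofReal_cos, Complex.cos, ← Complex.exp_nat_mul, ← Complex.exp_neg]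
    push_cast
    ring_nf; rw [hw]; ring_nf
  have hsin3 : (Real.sin (3 * π * s / 2) : ℂ) =
      ((Complex.exp w ^ 3)⁻¹ - Complex.exp w ^ 3) * Complex.I / 2 := by
    rw [Complex.ofReal_sin, Complex.sin, ← Complex.exp_nat_mul, ← Complex.exp_neg]
    push_cast
    ring_nf; rw [hw]; ring_nf
  have hcos1 : (Real.cos (π * s / 2) : ℂ) = (Complex.exp w + (Complex.exp w)⁻¹) / 2 := by
    rw [Complex.ofReal_cos, Complex.cos, ← Complex.exp_neg]
    push_cast
    ring_nf; rw [hw]; ring_nf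
  have hsin1 : (Real.sin (π * s / 2) : ℂ) =
      ((Complex.exp w)⁻¹ - Complex.exp w) * Complex.I / 2 := by
    rw [Complex.ofReal_sin, Complex.sin, ← Complex.exp_neg]
    push_cast
    ring_nf; rw [hw]; ring_nf
  simp only [Rpoly, Polynomial.eval_add, Polynomial.eval_mul, Polynomial.eval_pow,
    Polynomial.eval_C, Polynomial.eval_X, h2w, h3w]
  simp only [Complex.ofReal_add, Complex.ofReal_mul]
  rw [hcos3, hsin3, hcos1, hsin1]
  field_simp
  ring_nf

end Aux

/-- The curve `γ₁¹ ∈ LS³(−1, k)` is convex: it meets every hyperplane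
through the origin of `ℝ⁴` with total multiplicity at most 3 on `(0,1)`. -/
theorem stmt_15 : ∀ h : Fin 4 → ℝ, h ≠ 0 → MultAtMost gamma11 0 1 h 3 := by
  intro h hne j t m ht hinj hm hvan
  obtain ⟨a, ha⟩ : ∃ x : ℝ, x = h 0 / 4 - Real.sqrt 3 * h 2 / 4 := ⟨_, rfl⟩
  obtain ⟨b, hb⟩ : ∃ x : ℝ, x = Real.sqrt 3 * h 1 / 4 - h 3 / 4 := ⟨_, rfl⟩
  obtain ⟨cc, hcc⟩ : ∃ x : ℝ, x = 3 * h 0 / 4 + Real.sqrt 3 * h 2 / 4 := ⟨_, rfl⟩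
  obtain ⟨d, hd⟩ : ∃ x : ℝ, x = Real.sqrt 3 * h 1 / 4 + 3 * h 3 / 4 := ⟨_, rfl⟩
  have hfeq : ∀ s : ℝ, dotv h (gamma11 s) =
      a * Real.cos (3 * π * s / 2) + b * Real.sin (3 * π * s / 2)
        + cc * Real.cos (π * s / 2) + d * Real.sin (π * s / 2) := by
    intro s
    rw [ha, hb, hcc, hd]
    simp [dotv, gamma11, Fin.sum_univ_four]
    ring
  have hsq3 : (0 : ℝ) < Real.sqrt 3 := Real.sqrt_pos.mpr (by norm_num)
  have hR0 : Rpoly a b cc d ≠ 0 := by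
    apply Rpoly_ne_zero
    rintro ⟨ha0, hb0, hcc0, hd0⟩
    rw [ha0] at ha; rw [hb0] at hb; rw [hcc0] at hcc; rw [hd0] at hd
    have h0 : h 0 = 0 := by linarith
    have h2 : Real.sqrt 3 * h 2 = 0 := by linarith
    have h3 : h 3 = 0 := by linarith
    have h1 : Real.sqrt 3 * h 1 = 0 := by linarith
    have h2' : h 2 = 0 := by
      rcases mul_eq_zero.mp h2 with hx | hx
      · linarith
      · exact hx
    have h1' : h 1 = 0 := by
      rcases mul_eq_zero.mp h1 with hx | hx
      · linarith
      · exact hx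
    apply hne
    funext i
    fin_cases i <;> simp [h0, h1', h2', h3]
  set c : ℂ := (π : ℂ) * Complex.I with hc_def
  have hc : c ≠ 0 := by
    rw [hc_def]
    exact mul_ne_zero (by exact_mod_cast Real.pi_ne_zero) Complex.I_ne_zero
  have hfC : ContDiff ℝ ∞ (fun s => dotv h (gamma11 s)) := by
    rw [show (fun s => dotv h (gamma11 s)) = fun s =>
      a * Real.cos (3 * π * s / 2) + b * Real.sin (3 * π * s / 2)
        + cc * Real.cos (π * s / 2) + d * Real.sin (π * s / 2) from funext hfeq]
    have hl3 : ContDiff ℝ ∞ (fun s : ℝ => 3 * π * s / 2) := (contDiff_const.mul contDiff_id).div_const 2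
    have hl1 : ContDiff ℝ ∞ (fun s : ℝ => π * s / 2) := (contDiff_const.mul contDiff_id).div_const 2
    exact (((contDiff_const.mul hl3.cos).add (contDiff_const.mul hl3.sin)).add
      (contDiff_const.mul hl1.cos)).add (contDiff_const.mul hl1.sin)
  have hu : ContDiff ℝ ∞ (fun s : ℝ => 2 * Complex.exp (3 * (π : ℂ) * Complex.I * s / 2)) := by
    refine contDiff_const.mul (ContDiff.cexp ?_)
    exact (contDiff_const.mul Complex.ofRealCLM.contDiff).div_const 2
  have hv : ContDiff ℝ ∞ (fun s : ℝ => Complex.ofReal (dotv h (gamma11 s))) := by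
    exact Complex.ofRealCLM.contDiff.comp hfC
  have hvanv : ∀ i, ∀ l < m i,
      iteratedDeriv l (fun s : ℝ => Complex.ofReal (dotv h (gamma11 s))) (t i) = 0 := by
    intro i l hl
    rw [iteratedDeriv_ofReal l _ hfC, hvan i l hl, Complex.ofReal_zero]
  have hzero : ∀ i, ∀ l < m i,
      ((thop c)^[l] (Rpoly a b cc d)).eval (Complex.exp (c * (t i : ℝ))) = 0 := by
    intro i l hl
    rw [← iteratedDeriv_poly_exp]
    have hfun : (fun s : ℝ => (Rpoly a b cc d).eval (Complex.exp (c * s))) =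
        fun s : ℝ => (2 * Complex.exp (3 * (π : ℂ) * Complex.I * s / 2)) *
          Complex.ofReal (dotv h (gamma11 s)) := by
      funext s
      rw [hc_def, key_identity a b cc d s, hfeq s]
    rw [hfun]
    exact vanish_mul (m i) _ _ hu hv (hvanv i) l hl
  have hzinj : ∀ i i', Complex.exp (c * (t i : ℝ)) = Complex.exp (c * (t i' : ℝ)) → i = i' := by
    intro i i' hzz
    apply hinj
    obtain ⟨n, hn⟩ := Complex.exp_eq_exp_iff_exists_int.mp hzz
    have hc2 : c * ((t i : ℝ) : ℂ) = c * (((t i' : ℝ) + 2 * n : ℝ) : ℂ) := by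
      rw [hn, hc_def]; push_cast; ring
    have hcast := mul_left_cancel₀ hc hc2
    have hreal : t i = t i' + 2 * n := by exact_mod_cast hcast
    have h1 := (ht i).1; have h2 := (ht i).2
    have h1' := (ht i').1; have h2' := (ht i').2
    have hb1 : ((-1 : ℤ) : ℝ) < ((2 * n : ℤ) : ℝ) := by push_cast; linarith
    have hb2 : ((2 * n : ℤ) : ℝ) < ((1 : ℤ) : ℝ) := by push_cast; linarith
    have hn0 : n = 0 := by
      have hi1 : (-1 : ℤ) < 2 * n := by exact_mod_cast hb1
      have hi2 : (2 * n : ℤ) < 1 := by exact_mod_cast hb2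
      omega
    rw [hn0] at hreal; push_cast at hreal; linarith
  have hzroot : ∀ i, Complex.exp (c * (t i : ℝ)) ∈ (Rpoly a b cc d).roots.toFinset := by
    intro i
    rw [Multiset.mem_toFinset, Polynomial.mem_roots hR0]
    have := hzero i 0 (hm i)
    simpa [Polynomial.IsRoot] using this
  calc ∑ i, m i ≤ ∑ i, (Rpoly a b cc d).roots.count (Complex.exp (c * (t i : ℝ))) := by
        refine Finset.sum_le_sum fun i _ => ?_
        rw [Polynomial.count_roots]
        exact thop_mult hc (Complex.exp_ne_zero _) (m i) (Rpoly a b cc d) hR0 (hzero i)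
    _ = ∑ x ∈ Finset.univ.image (fun i => Complex.exp (c * (t i : ℝ))),
          (Rpoly a b cc d).roots.count x := by
        rw [Finset.sum_image (fun i _ i' _ hzz => hzinj i i' hzz)]
    _ ≤ ∑ x ∈ (Rpoly a b cc d).roots.toFinset, (Rpoly a b cc d).roots.count x := by
        apply Finset.sum_le_sum_of_subset
        intro x hx
        obtain ⟨i, _, rfl⟩ := Finset.mem_image.mp hx
        exact hzroot i
    _ = Multiset.card (Rpoly a b cc d).roots := Multiset.toFinset_sum_count_eq _
    _ ≤ (Rpoly a b cc d).natDegree := (Rpoly a b cc d).card_roots'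
    _ ≤ 3 := Rpoly_natDegree_le a b cc d
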